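/- arXiv:0902.0919 — 6 statements merged into one kernel-verified Lean document; each statement's English description precedes it below -/
import Mathlib

section
/- Let $n, m, p$ be natural numbers, let $E \in \mathbb{C}^{p \times n}$ and $A \in \mathbb{C}^{p \times m}$ be complex matrices, and let $\Theta \in \mathbb{C}^{(n+m) \times (n+m)}$ be a Hermitian matrix. Suppose (i) for every pair $(z, w) \in \mathbb{C}^n \times \mathbb{C}^m$ with $(z,w) \neq 0$ and $E z = A w$, the quadratic form satisfies $\begin{pmatrix} z \\ w \end{pmatrix}^* \Theta \begin{pmatrix} z \\ w \end{pmatrix} > 0$ (i.e. $\Theta$ is positive definite on the kernel of $[E\; -A]$). Then for every matrix $\nabla \in \mathbb{C}^{m \times n}$ satisfying (ii) $\begin{pmatrix} I_n \\ \nabla \end{pmatrix}^* \Theta \begin{pmatrix} I_n \\ \nabla \end{pmatrix} \preceq 0$ (negative semidefinite), the interconnection $E z = A w$, $w = \nabla z$ is well-posed, i.e. the only vector $z \in \mathbb{C}^n$ with $E z = A \nabla z$ is $z = 0$ (equivalently, $E - A\nabla$ has trivial kernel). -/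
open Matrix

/-- Sufficiency direction of the quadratic separation theorem: if the Hermitian
separator `Θ` is positive definite on the kernel of `[E  -A]` and satisfies
`[I  ∇*] Θ [I; ∇] ≼ 0`, then the interconnection `E z = A w`, `w = ∇ z` is
well-posed, i.e. `E - A∇` has trivial kernel. -/
theorem quadratic_separation_sufficiency (n m p : ℕ)
    (E : Matrix (Fin p) (Fin n) ℂ) (A : Matrix (Fin p) (Fin m) ℂ)
    (Θ : Matrix (Fin n ⊕ Fin m) (Fin n ⊕ Fin m) ℂ)
    (hHerm : Θ.IsHermitian)
    (hpos : ∀ (z : Fin n → ℂ) (w : Fin m → ℂ), ¬(z = 0 ∧ w = 0) →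
      E.mulVec z = A.mulVec w →
      0 < (star (Sum.elim z w) ⬝ᵥ Θ.mulVec (Sum.elim z w)).re)
    (D : Matrix (Fin m) (Fin n) ℂ)
    (hneg : ∀ x : Fin n → ℂ,
      (star (Sum.elim x (D.mulVec x)) ⬝ᵥ Θ.mulVec (Sum.elim x (D.mulVec x))).re ≤ 0) :
    ∀ z : Fin n → ℂ, E.mulVec z = A.mulVec (D.mulVec z) → z = 0 := by
  intro z hz
  by_contra h
  exact absurd (hneg z) (not_le.mpr (hpos z (D.mulVec z) (fun hc => h hc.1) hz))
end

section
/- Let $\bar{h} \geq 0$ and let $h \in [0, \bar{h}]$ be real. Then for every complex number $s \neq 0$ with $\operatorname{Re}(s) \geq 0$, one has $\left| \dfrac{1 - e^{-h s}}{s} \right| \leq \bar{h}$. -/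
/-- For a delay `h ∈ [0, h̄]` and any nonzero `s` in the closed right half-plane,
`|(1 - e^{-hs})/s| ≤ h̄`. -/
theorem abs_one_sub_exp_div_le (hbar h : ℝ) (hbar0 : 0 ≤ hbar) (h0 : 0 ≤ h) (hh : h ≤ hbar)
    (s : ℂ) (hs : s ≠ 0) (hre : 0 ≤ s.re) :
    ‖(1 - Complex.exp (-(h : ℂ) * s)) / s‖ ≤ hbar := by
  have key : (1 - Complex.exp (-(h : ℂ) * s)) / s
      = ∫ t in (0:ℝ)..h, Complex.exp ((-s) * t) := by
    rw [integral_exp_mul_complex (by simpa using hs), show -(h:ℂ)*s = -s*h by ring,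
      div_neg, ← neg_div, neg_sub]
    simp
  rw [key]
  calc ‖∫ t in (0:ℝ)..h, Complex.exp ((-s) * t)‖
      ≤ 1 * |h - 0| := by
        apply intervalIntegral.norm_integral_le_of_norm_le_const
        intro t ht
        rw [Set.uIoc_of_le h0] at ht
        rw [Complex.norm_exp]
        have : ((-s) * t).re = -s.re * t := by simp
        rw [this]
        exact Real.exp_le_one_iff.mpr (by nlinarith [ht.1.le])
    _ ≤ hbar := by rw [abs_of_nonneg (by linarith)]; linarith
end

section
/- Let $N \geq 1$, set $n = N+1$, let $s \neq 0$ be a complex number with $\operatorname{Re}(s) \geq 0$, let $\tau^f_i, \tau^b_i, \tau_i \geq 0$ ($i = 1, \ldots, N$) be real delays, let $P \in \mathbb{C}^{n \times n}$ be Hermitian positive semidefinite, and let $Q^f, Q^b, Q \in \mathbb{C}^{N \times N}$ be diagonal matrices with nonnegative real diagonal entries. Define the block-diagonal uncertainty $\nabla = \mathrm{Diag}\big(s^{-1} I_n,\; \mathcal{D}_{\tau^f},\; \mathcal{D}_{\tau^b},\; \mathcal{D}_{\tau}\big)$ where $\mathcal{D}_\Diamond = \mathrm{diag}(e^{-\Diamond_1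 s}, \ldots, e^{-\Diamond_N s})$, and the Hermitian separator $\Theta = \begin{pmatrix} \Theta_{11} & \Theta_{12} \\ \Theta_{12}^* & \Theta_{22} \end{pmatrix}$ with $\Theta_{11} = \mathrm{Diag}(0_n, -Q^f, -Q^b, -Q)$, $\Theta_{12} = \mathrm{Diag}(-P, 0_{3N})$, $\Theta_{22} = \mathrm{Diag}(0_n, Q^f, Q^b, Q)$. Then $\begin{pmatrix} I \\ \nabla \end{pmatrix}^* \Theta \begin{pmatrix} I \\ \nabla \end{pmatrix}$ is negative semidefinite. -/
open Matrix ComplexOrder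

/-- Index type for the delay-independent uncertainty: integrator block of size `N+1`
followed by the three delay blocks of size `N`. -/
abbrev IodIdx (N : ℕ) : Type := Fin (N + 1) ⊕ (Fin N ⊕ Fin N ⊕ Fin N)

/-- The delay-independent quadratic separator `Θ` of the TCP/AQM model satisfies the
uncertainty-side inequality: `[I; ∇]ᴴ Θ [I; ∇]` is negative semidefinite for the
uncertainty `∇ = Diag(s⁻¹ I, 𝒟_{τᶠ}, 𝒟_{τᵇ}, 𝒟_τ)` at any nonzero point `s` of the
closed right half-plane. -/
theorem iod_separator_negativity (N : ℕ) (hN : 1 ≤ N)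
    (s : ℂ) (hs : s ≠ 0) (hre : 0 ≤ s.re)
    (τf τb τ : Fin N → ℝ) (hτf : ∀ i, 0 ≤ τf i) (hτb : ∀ i, 0 ≤ τb i) (hτ : ∀ i, 0 ≤ τ i)
    (P : Matrix (Fin (N + 1)) (Fin (N + 1)) ℂ) (hP : P.PosSemidef)
    (qf qb q : Fin N → ℝ) (hqf : ∀ i, 0 ≤ qf i) (hqb : ∀ i, 0 ≤ qb i) (hq : ∀ i, 0 ≤ q i)
    (nab : Matrix (IodIdx N) (IodIdx N) ℂ)
    (hnab : nab = Matrix.diagonal (Sum.elim (fun _ => s⁻¹)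
      (Sum.elim (fun i => Complex.exp (-(τf i : ℂ) * s))
        (Sum.elim (fun i => Complex.exp (-(τb i : ℂ) * s))
          (fun i => Complex.exp (-(τ i : ℂ) * s))))))
    (Θ11 Θ12 Θ22 : Matrix (IodIdx N) (IodIdx N) ℂ)
    (hΘ11 : Θ11 = Matrix.diagonal (Sum.elim (fun _ => (0 : ℂ))
      (Sum.elim (fun i => -(qf i : ℂ))
        (Sum.elim (fun i => -(qb i : ℂ)) (fun i => -(q i : ℂ))))))
    (hΘ12 : Θ12 = Matrix.fromBlocks (-P) 0 0 0)
    (hΘ22 : Θ22 = Matrix.diagonal (Sum.elim (fun _ => (0 : ℂ))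
      (Sum.elim (fun i => (qf i : ℂ))
        (Sum.elim (fun i => (qb i : ℂ)) (fun i => (q i : ℂ))))))
    (Θ : Matrix (IodIdx N ⊕ IodIdx N) (IodIdx N ⊕ IodIdx N) ℂ)
    (hΘ : Θ = Matrix.fromBlocks Θ11 Θ12 Θ12ᴴ Θ22)
    (J : Matrix (IodIdx N ⊕ IodIdx N) (IodIdx N) ℂ)
    (hJ : J = Matrix.of fun k j =>
      Sum.elim (fun i => if i = j then (1 : ℂ) else 0) (fun i => nab i j) k) :
    (-(Jᴴ * Θ * J)).PosSemidef := by
  -- uniform functions over the three delay blocks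
  set tt : Fin N ⊕ Fin N ⊕ Fin N → ℝ := Sum.elim τf (Sum.elim τb τ) with htt_def
  set cw : Fin N ⊕ Fin N ⊕ Fin N → ℝ := Sum.elim qf (Sum.elim qb q) with hcw_def
  have hcw : ∀ i, 0 ≤ cw i := by rintro (i | i | i)
                                 exacts [hqf i, hqb i, hq i]
  have htt : ∀ i, 0 ≤ tt i := by rintro (i | i | i)
                                 exacts [hτf i, hτb i, hτ i]
  set dd : Fin N ⊕ Fin N ⊕ Fin N → ℂ := fun i => Complex.exp (-(tt i : ℂ) * s) with hdd_def
  have hnab' : nab = Matrix.diagonal (Sum.elim (fun _ => s⁻¹) dd) := by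
    rw [hnab]; congr 1; funext k; rcases k with i | (i | i | i) <;> rfl
  have hΘ11' : Θ11 = Matrix.diagonal (Sum.elim (fun _ => (0:ℂ)) (fun i => -(cw i : ℂ))) := by
    rw [hΘ11]; congr 1; funext k; rcases k with i | (i | i | i) <;> rfl
  have hΘ22' : Θ22 = Matrix.diagonal (Sum.elim (fun _ => (0:ℂ)) (fun i => (cw i : ℂ))) := by
    rw [hΘ22]; congr 1; funext k; rcases k with i | (i | i | i) <;> rfl
  -- Hermitian facts
  have hΘ11H : Θ11.IsHermitian := by
    rw [hΘ11']
    apply Matrix.isHermitian_diagonal_of_self_adjoint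
    funext k; rcases k with i | i <;> simp [Pi.star_apply, _root_.IsSelfAdjoint]
  have hΘ22H : Θ22.IsHermitian := by
    rw [hΘ22']
    apply Matrix.isHermitian_diagonal_of_self_adjoint
    funext k; rcases k with i | i <;> simp [Pi.star_apply, _root_.IsSelfAdjoint]
  have hΘH : Θ.IsHermitian := by
    rw [hΘ]
    exact Matrix.IsHermitian.fromBlocks hΘ11H rfl hΘ22H
  refine Matrix.posSemidef_iff_dotProduct_mulVec.mpr ⟨?_, ?_⟩
  · exact (Matrix.isHermitian_conjTranspose_mul_mul J hΘH).neg
  intro x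
  -- the transformed vector
  set w : IodIdx N → ℂ := fun k => Sum.elim (fun _ => s⁻¹) dd k * x k with hw_def
  have hJx : J *ᵥ x = Sum.elim x w := by
    funext k
    cases k with
    | inl i => simp [hJ, mulVec, dotProduct]
    | inr i =>
      simp [hnab', hJ, mulVec, dotProduct, Matrix.diagonal_apply, Finset.sum_ite_eq, hw_def]
  have hstar : star (Sum.elim x w) = Sum.elim (star x) (star w) :=
    funext fun k => by cases k <;> rfl
  have key : star x ⬝ᵥ ((Jᴴ * Θ * J) *ᵥ x) = star (Sum.elim x w) ⬝ᵥ (Θ *ᵥ Sum.elim x w) := by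
    rw [← hJx, ← Matrix.mulVec_mulVec, ← Matrix.mulVec_mulVec, Matrix.dotProduct_mulVec,
      ← Matrix.star_mulVec]
  set x0 : Fin (N + 1) → ℂ := fun i => x (Sum.inl i) with hx0
  set S : ℂ := dotProduct (star x0) (P *ᵥ x0) with hS_def
  have hS : 0 ≤ S := hP.dotProduct_mulVec_nonneg x0
  have hwinl : w ∘ Sum.inl = s⁻¹ • x0 := funext fun i => rfl
  have hswinl : star w ∘ Sum.inl = (starRingEnd ℂ) s⁻¹ • star x0 := funext fun i => by
    simp [hw_def, hx0, Pi.star_apply, mul_comm]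
  have t2 : star x ⬝ᵥ (Θ12 *ᵥ w) = -(s⁻¹ * S) := by
    rw [hΘ12, Matrix.fromBlocks_mulVec, Matrix.dotProduct_block, hwinl]
    simp only [Matrix.zero_mulVec, add_zero, zero_add, dotProduct_zero,
      Sum.elim_comp_inl, Sum.elim_comp_inr, Matrix.mulVec_smul, Matrix.neg_mulVec,
      dotProduct_smul, dotProduct_neg, smul_eq_mul, mul_neg, mul_zero, add_zero]
    rfl
  have t3 : star w ⬝ᵥ (Θ12ᴴ *ᵥ x) = -((starRingEnd ℂ) s⁻¹ * S) := by
    rw [hΘ12, Matrix.fromBlocks_conjTranspose]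
    simp only [Matrix.conjTranspose_zero, Matrix.conjTranspose_neg, hP.1.eq]
    rw [Matrix.fromBlocks_mulVec, Matrix.dotProduct_block, hswinl]
    simp only [Matrix.zero_mulVec, add_zero, zero_add, dotProduct_zero,
      Sum.elim_comp_inl, Sum.elim_comp_inr, smul_dotProduct, Matrix.neg_mulVec,
      dotProduct_neg, smul_eq_mul, mul_neg, mul_zero, add_zero]
    rfl
  have diag_form : ∀ (e v : IodIdx N → ℂ),
      star v ⬝ᵥ (Matrix.diagonal e *ᵥ v) = ∑ k, e k * ((starRingEnd ℂ) (v k) * v k) := by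
    intro e v
    simp only [dotProduct, Matrix.mulVec_diagonal, Pi.star_apply, RCLike.star_def]
    exact Finset.sum_congr rfl fun k _ => by ring
  have t1 : star x ⬝ᵥ (Θ11 *ᵥ x) = ∑ i : Fin N ⊕ Fin N ⊕ Fin N,
      -(cw i : ℂ) * ((starRingEnd ℂ) (x (Sum.inr i)) * x (Sum.inr i)) := by
    rw [hΘ11', diag_form, Fintype.sum_sum_type]
    simp only [Sum.elim_inl, Sum.elim_inr, zero_mul, Finset.sum_const_zero, zero_add]
  have t4 : star w ⬝ᵥ (Θ22 *ᵥ w) = ∑ i : Fin N ⊕ Fin N ⊕ Fin N,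
      (cw i : ℂ) * ((starRingEnd ℂ) (dd i) * dd i)
        * ((starRingEnd ℂ) (x (Sum.inr i)) * x (Sum.inr i)) := by
    rw [hΘ22', diag_form, Fintype.sum_sum_type]
    simp only [Sum.elim_inl, Sum.elim_inr, zero_mul, Finset.sum_const_zero, zero_add]
    refine Finset.sum_congr rfl fun i _ => ?_
    have hwinr : w (Sum.inr i) = dd i * x (Sum.inr i) := rfl
    rw [hwinr, _root_.map_mul]
    ring
  have hform : star (Sum.elim x w) ⬝ᵥ (Θ *ᵥ Sum.elim x w)
      = -(s⁻¹ * S) - (starRingEnd ℂ) s⁻¹ * S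
        + ∑ i : Fin N ⊕ Fin N ⊕ Fin N,
            (cw i : ℂ) * ((starRingEnd ℂ) (dd i) * dd i - 1)
              * ((starRingEnd ℂ) (x (Sum.inr i)) * x (Sum.inr i)) := by
    rw [hstar, hΘ, Matrix.fromBlocks_mulVec, sumElim_dotProduct_sumElim]
    rw [show Sum.elim x w ∘ Sum.inl = x from rfl, show Sum.elim x w ∘ Sum.inr = w from rfl]
    rw [dotProduct_add, dotProduct_add, t1, t2, t3, t4]
    have hsum : (∑ i : Fin N ⊕ Fin N ⊕ Fin N,
          -(cw i : ℂ) * ((starRingEnd ℂ) (x (Sum.inr i)) * x (Sum.inr i)))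
        + (∑ i : Fin N ⊕ Fin N ⊕ Fin N,
            (cw i : ℂ) * ((starRingEnd ℂ) (dd i) * dd i)
              * ((starRingEnd ℂ) (x (Sum.inr i)) * x (Sum.inr i)))
        = ∑ i : Fin N ⊕ Fin N ⊕ Fin N,
            (cw i : ℂ) * ((starRingEnd ℂ) (dd i) * dd i - 1)
              * ((starRingEnd ℂ) (x (Sum.inr i)) * x (Sum.inr i)) := by
      rw [← Finset.sum_add_distrib]
      exact Finset.sum_congr rfl fun i _ => by ring
    linear_combination hsum
  rw [Matrix.neg_mulVec, dotProduct_neg, key, hform]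
  have h2 : ∑ i : Fin N ⊕ Fin N ⊕ Fin N,
      (cw i : ℂ) * (1 - (starRingEnd ℂ) (dd i) * dd i)
        * ((starRingEnd ℂ) (x (Sum.inr i)) * x (Sum.inr i))
      = -∑ i : Fin N ⊕ Fin N ⊕ Fin N,
          (cw i : ℂ) * ((starRingEnd ℂ) (dd i) * dd i - 1)
            * ((starRingEnd ℂ) (x (Sum.inr i)) * x (Sum.inr i)) := by
    rw [← Finset.sum_neg_distrib]
    exact Finset.sum_congr rfl fun i _ => by ring
  have heq : -(-(s⁻¹ * S) - (starRingEnd ℂ) s⁻¹ * S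
        + ∑ i : Fin N ⊕ Fin N ⊕ Fin N,
            (cw i : ℂ) * ((starRingEnd ℂ) (dd i) * dd i - 1)
              * ((starRingEnd ℂ) (x (Sum.inr i)) * x (Sum.inr i)))
      = (s⁻¹ + (starRingEnd ℂ) s⁻¹) * S
        + ∑ i : Fin N ⊕ Fin N ⊕ Fin N,
            (cw i : ℂ) * (1 - (starRingEnd ℂ) (dd i) * dd i)
              * ((starRingEnd ℂ) (x (Sum.inr i)) * x (Sum.inr i)) := by
    linear_combination -h2
  rw [heq]
  have h3 : (0:ℂ) ≤ (s⁻¹ + (starRingEnd ℂ) s⁻¹) * S := by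
    refine mul_nonneg ?_ hS
    rw [Complex.add_conj, Complex.zero_le_real]
    have : 0 ≤ (s⁻¹).re := by
      rw [Complex.inv_re]
      exact div_nonneg hre (Complex.normSq_nonneg s)
    linarith
  refine add_nonneg h3 (Finset.sum_nonneg fun i _ => ?_)
  have hdi : dd i = Complex.exp (-(tt i : ℂ) * s) := rfl
  rw [hdi]
  have h1 : (starRingEnd ℂ) (Complex.exp (-(tt i : ℂ) * s)) * Complex.exp (-(tt i : ℂ) * s)
      = ((Real.exp (-(2 * tt i * s.re)) : ℝ) : ℂ) := by
    rw [← Complex.exp_conj, ← Complex.exp_add, Complex.ofReal_exp]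
    congr 1
    simp [Complex.ext_iff]
    ring
  rw [h1]
  have h4 : (1:ℂ) - ((Real.exp (-(2 * tt i * s.re)) : ℝ) : ℂ)
      = ((1 - Real.exp (-(2 * tt i * s.re)) : ℝ) : ℂ) := by push_cast; ring
  rw [h4, Complex.normSq_eq_conj_mul_self.symm, ← Complex.ofReal_mul, ← Complex.ofReal_mul,
    Complex.zero_le_real]
  have he : Real.exp (-(2 * tt i * s.re)) ≤ 1 :=
    Real.exp_le_one_iff.mpr (by nlinarith [htt i])
  exact mul_nonneg (mul_nonneg (hcw i) (by linarith)) (Complex.normSq_nonneg _)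
end

section
/- Let $N \geq 1$, set $n = N+1$, let $s \neq 0$ be a complex number with $\operatorname{Re}(s) \geq 0$, let $\tau^f_i, \tau^b_i, \tau_i \geq 0$ ($i = 1, \ldots, N$) be real delays with $T^f = \mathrm{diag}(\tau^f_i)$, $T^b = \mathrm{diag}(\tau^b_i)$, $T = \mathrm{diag}(\tau_i)$, let $P \in \mathbb{C}^{n \times n}$ be Hermitian positive semidefinite, and let $Q_0^f, Q_0^b, Q_0, Q_1^f, Q_1^b, Q_1 \in \mathbb{C}^{N \times N}$ be diagonal matrices with nonnegative real diagonal entries. Define the block-diagonal uncertainty $\nabla = \mathrm{Diag}\big(s^{-1} I_n, \mathcal{D}_{\tau^f}, \mathcal{D}_{\tau^b}, \mathcal{D}_{\tau}, \mathcal{I}_{\tau^f}, \mathcal{I}_{\tau^b}, \mathcal{I}_{\tau}\big)$ where $\mathcal{D}_\Diamond = \mathrm{diag}(e^{-\Diamond_1 s}, \ldots, e^{-\Diamond_N s})$ and $\mathcal{I}_\Diamond = \mathrm{diag}\big(\frac{1-e^{-\Diamond_1 s}}{s}, \ldots, \frac{1-e^{-\Diamond_N s}}{s}\big)$, and the Hermitian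 separator $\Theta = \begin{pmatrix} \Theta_{11} & \Theta_{12} \\ \Theta_{12}^* & \Theta_{22} \end{pmatrix}$ with $\Theta_{11} = \mathrm{Diag}\big(0_n, -Q_0^f, -Q_0^b, -Q_0, -Q_1^f (T^f)^2, -Q_1^b (T^b)^2, -Q_1 T^2\big)$, $\Theta_{12} = \mathrm{Diag}(-P, 0_{6N})$, $\Theta_{22} = \mathrm{Diag}\big(0_n, Q_0^f, Q_0^b, Q_0, Q_1^f, Q_1^b, Q_1\big)$. Then $\begin{pmatrix} I \\ \nabla \end{pmatrix}^* \Theta \begin{pmatrix} I \\ \nabla \end{pmatrix}$ is negative semidefinite. -/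
open Matrix ComplexOrder

-- analytic lemma 1
lemma aux_exp_norm_le (s : ℂ) (hre : 0 ≤ s.re) (t : ℝ) (ht : 0 ≤ t) :
    ‖Complex.exp (-(t : ℂ) * s)‖ ≤ 1 := by
  rw [Complex.norm_exp]
  rw [Real.exp_le_one_iff]
  simp only [Complex.mul_re, Complex.neg_re, Complex.ofReal_re, Complex.neg_im,
    Complex.ofReal_im, neg_zero, zero_mul, sub_zero]
  nlinarith

-- analytic lemma 2
lemma aux_int_norm_le (s : ℂ) (hs : s ≠ 0) (hre : 0 ≤ s.re) (t : ℝ) (ht : 0 ≤ t) :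
    ‖(1 - Complex.exp (-(t : ℂ) * s)) / s‖ ≤ t := by
  have hns : -s ≠ 0 := neg_ne_zero.mpr hs
  have hint : (∫ x : ℝ in (0:ℝ)..t, Complex.exp (-s * x)) = (1 - Complex.exp (-(t:ℂ) * s)) / s := by
    rw [integral_exp_mul_complex hns]
    rw [Complex.ofReal_zero, mul_zero, Complex.exp_zero]
    rw [show -s * (t:ℂ) = -(t:ℂ) * s by ring]
    rw [div_neg, ← neg_div, neg_sub]
  rw [← hint]
  have := intervalIntegral.norm_integral_le_of_norm_le_const (a := (0:ℝ)) (b := t) (C := 1)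
    (f := fun x : ℝ => Complex.exp (-s * x)) ?_
  · simpa [abs_of_nonneg ht] using this
  · intro x hx
    rw [Set.uIoc_of_le ht] at hx
    have hx0 : 0 ≤ x := le_of_lt hx.1
    rw [Complex.norm_exp, Real.exp_le_one_iff]
    simp only [Complex.mul_re, Complex.neg_re, Complex.neg_im, Complex.ofReal_re,
      Complex.ofReal_im, mul_zero, sub_zero]
    nlinarith

-- fromBlocks A 0 0 0 is PSD when A is
lemma aux_fromBlocks_psd {m m₂ : Type*} [Fintype m] [Fintype m₂] [DecidableEq m]
    {A : Matrix m m ℂ} (hA : A.PosSemidef) :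
    (Matrix.fromBlocks A 0 0 (0 : Matrix m₂ m₂ ℂ)).PosSemidef := by
  have h := hA.mul_mul_conjTranspose_same (Matrix.fromRows (1 : Matrix m m ℂ) (0 : Matrix m₂ m ℂ))
  have he : Matrix.fromRows (1 : Matrix m m ℂ) (0 : Matrix m₂ m ℂ) * A *
      (Matrix.fromRows (1 : Matrix m m ℂ) (0 : Matrix m₂ m ℂ))ᴴ
      = Matrix.fromBlocks A 0 0 (0 : Matrix m₂ m₂ ℂ) := by
    rw [Matrix.conjTranspose_fromRows_eq_fromCols_conjTranspose, Matrix.fromRows_mul,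
      Matrix.fromRows_mul_fromCols]
    simp
  rwa [he] at h

-- scalar entry nonnegativity
lemma aux_entry_nonneg (q B : ℝ) (hq : 0 ≤ q) (e : ℂ) (he : ‖e‖ ≤ B) :
    0 ≤ ((q * B ^ 2 : ℝ) : ℂ) - star e * ((q : ℂ) * e) := by
  have h1 : star e * ((q : ℂ) * e) = ((q * Complex.normSq e : ℝ) : ℂ) := by
    push_cast
    rw [Complex.star_def]
    rw [show (starRingEnd ℂ) e * ((q:ℂ) * e) = (q:ℂ) * ((starRingEnd ℂ) e * e) by ring]
    rw [Complex.normSq_eq_conj_mul_self]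
  rw [h1, ← Complex.ofReal_sub, Complex.zero_le_real]
  have hB : 0 ≤ B := le_trans (norm_nonneg e) he
  have : Complex.normSq e ≤ B ^ 2 := by
    rw [Complex.normSq_eq_norm_sq]
    exact pow_le_pow_left₀ (norm_nonneg e) he 2
  nlinarith

lemma aux_psd_smul {m : Type*} [Fintype m] {P : Matrix m m ℂ} (hP : P.PosSemidef)
    (r : ℝ) (hr : 0 ≤ r) : ((r : ℂ) • P).PosSemidef := by
  constructor
  · rw [Matrix.IsHermitian, Matrix.conjTranspose_smul, hP.1.eq]
    simp [Complex.star_def, Complex.conj_ofReal]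
  · exact (hP.smul (Complex.zero_le_real.mpr hr)).2
abbrev DdIdx (N : ℕ) : Type :=
  Fin (N + 1) ⊕ (Fin N ⊕ Fin N ⊕ Fin N ⊕ Fin N ⊕ Fin N ⊕ Fin N)

/-- The delay-dependent quadratic separator `Θ` of the TCP/AQM model satisfies the
uncertainty-side inequality: `[I; ∇]ᴴ Θ [I; ∇]` is negative semidefinite for the
augmented uncertainty `∇ = Diag(s⁻¹ I, 𝒟_{τᶠ}, 𝒟_{τᵇ}, 𝒟_τ, ℐ_{τᶠ}, ℐ_{τᵇ}, ℐ_τ)`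
at any nonzero point `s` of the closed right half-plane. -/
theorem dd_separator_negativity (N : ℕ) (hN : 1 ≤ N)
    (s : ℂ) (hs : s ≠ 0) (hre : 0 ≤ s.re)
    (τf τb τ : Fin N → ℝ) (hτf : ∀ i, 0 ≤ τf i) (hτb : ∀ i, 0 ≤ τb i) (hτ : ∀ i, 0 ≤ τ i)
    (P : Matrix (Fin (N + 1)) (Fin (N + 1)) ℂ) (hP : P.PosSemidef)
    (q0f q0b q0 q1f q1b q1 : Fin N → ℝ)
    (hq0f : ∀ i, 0 ≤ q0f i) (hq0b : ∀ i, 0 ≤ q0b i) (hq0 : ∀ i, 0 ≤ q0 i)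
    (hq1f : ∀ i, 0 ≤ q1f i) (hq1b : ∀ i, 0 ≤ q1b i) (hq1 : ∀ i, 0 ≤ q1 i)
    (nab : Matrix (DdIdx N) (DdIdx N) ℂ)
    (hnab : nab = Matrix.diagonal (Sum.elim (fun _ => s⁻¹)
      (Sum.elim (fun i => Complex.exp (-(τf i : ℂ) * s))
        (Sum.elim (fun i => Complex.exp (-(τb i : ℂ) * s))
          (Sum.elim (fun i => Complex.exp (-(τ i : ℂ) * s))
            (Sum.elim (fun i => (1 - Complex.exp (-(τf i : ℂ) * s)) / s)
              (Sum.elim (fun i => (1 - Complex.exp (-(τb i : ℂ) * s)) / s)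
                (fun i => (1 - Complex.exp (-(τ i : ℂ) * s)) / s))))))))
    (Θ11 Θ12 Θ22 : Matrix (DdIdx N) (DdIdx N) ℂ)
    (hΘ11 : Θ11 = Matrix.diagonal (Sum.elim (fun _ => (0 : ℂ))
      (Sum.elim (fun i => -(q0f i : ℂ))
        (Sum.elim (fun i => -(q0b i : ℂ))
          (Sum.elim (fun i => -(q0 i : ℂ))
            (Sum.elim (fun i => -((q1f i : ℂ) * (τf i : ℂ) ^ 2))
              (Sum.elim (fun i => -((q1b i : ℂ) * (τb i : ℂ) ^ 2))
                (fun i => -((q1 i : ℂ) * (τ i : ℂ) ^ 2)))))))))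
    (hΘ12 : Θ12 = Matrix.fromBlocks (-P) 0 0 0)
    (hΘ22 : Θ22 = Matrix.diagonal (Sum.elim (fun _ => (0 : ℂ))
      (Sum.elim (fun i => (q0f i : ℂ))
        (Sum.elim (fun i => (q0b i : ℂ))
          (Sum.elim (fun i => (q0 i : ℂ))
            (Sum.elim (fun i => (q1f i : ℂ))
              (Sum.elim (fun i => (q1b i : ℂ)) (fun i => (q1 i : ℂ)))))))))
    (Θ : Matrix (DdIdx N ⊕ DdIdx N) (DdIdx N ⊕ DdIdx N) ℂ)
    (hΘ : Θ = Matrix.fromBlocks Θ11 Θ12 Θ12ᴴ Θ22)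
    (J : Matrix (DdIdx N ⊕ DdIdx N) (DdIdx N) ℂ)
    (hJ : J = Matrix.of fun k j =>
      Sum.elim (fun i => if i = j then (1 : ℂ) else 0) (fun i => nab i j) k) :
    (-(Jᴴ * Θ * J)).PosSemidef := by
  classical
  -- J as a row-partitioned matrix
  have hJ' : J = Matrix.fromRows (1 : Matrix (DdIdx N) (DdIdx N) ℂ) nab := by
    rw [hJ]
    ext k j
    cases k with
    | inl i => simp [Matrix.fromRows_apply_inl, Matrix.one_apply]
    | inr i => simp [Matrix.fromRows_apply_inr]
  -- expand the quadratic form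
  have hM : Jᴴ * Θ * J
      = (Θ12 * nab + nabᴴ * Θ12ᴴ) + (Θ11 + nabᴴ * (Θ22 * nab)) := by
    rw [hJ', hΘ, Matrix.conjTranspose_fromRows_eq_fromCols_conjTranspose,
      Matrix.conjTranspose_one, Matrix.mul_assoc, Matrix.fromBlocks_mul_fromRows,
      Matrix.fromCols_mul_fromRows]
    simp only [Matrix.mul_one, Matrix.one_mul, Matrix.mul_add]
    abel
  -- the r.h.s. big diagonal function of nab
  set g : (Fin N ⊕ Fin N ⊕ Fin N ⊕ Fin N ⊕ Fin N ⊕ Fin N) → ℂ :=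
      Sum.elim (fun i => Complex.exp (-(τf i : ℂ) * s))
        (Sum.elim (fun i => Complex.exp (-(τb i : ℂ) * s))
          (Sum.elim (fun i => Complex.exp (-(τ i : ℂ) * s))
            (Sum.elim (fun i => (1 - Complex.exp (-(τf i : ℂ) * s)) / s)
              (Sum.elim (fun i => (1 - Complex.exp (-(τb i : ℂ) * s)) / s)
                (fun i => (1 - Complex.exp (-(τ i : ℂ) * s)) / s))))) with hg
  -- compute Θ12 * nab
  have h12 : Θ12 * nab
      = Matrix.fromBlocks ((-s⁻¹) • P) 0 0
          (0 : Matrix (Fin N ⊕ Fin N ⊕ Fin N ⊕ Fin N ⊕ Fin N ⊕ Fin N)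
               (Fin N ⊕ Fin N ⊕ Fin N ⊕ Fin N ⊕ Fin N ⊕ Fin N) ℂ) := by
    rw [hΘ12, hnab]
    ext k j
    rw [Matrix.mul_diagonal]
    rcases k with i | i <;> rcases j with j' | j' <;>
      simp [Matrix.fromBlocks] <;> ring
  -- first summand: Hermitian part of the P-block
  have hc : 0 ≤ 2 * (s⁻¹).re := by
    have h1 : (s⁻¹).re = s.re / Complex.normSq s := Complex.inv_re s
    have h2 : 0 ≤ s.re / Complex.normSq s := div_nonneg hre (Complex.normSq_nonneg s)
    linarith [h1 ▸ h2]
  have hS1 : (-(Θ12 * nab) - nabᴴ * Θ12ᴴ).PosSemidef := by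
    have he : -(Θ12 * nab) - nabᴴ * Θ12ᴴ
        = Matrix.fromBlocks (((2 * (s⁻¹).re : ℝ) : ℂ) • P) 0 0 0 := by
      rw [← Matrix.conjTranspose_mul, h12, Matrix.fromBlocks_conjTranspose]
      ext k j
      rcases k with i | i <;> rcases j with j' | j' <;>
        simp [Matrix.fromBlocks, Matrix.conjTranspose_apply, hP.1.apply]
      have key : s⁻¹ + ((starRingEnd ℂ) s)⁻¹ = 2 * ((s.re : ℂ) / (Complex.normSq s : ℂ)) := by
        rw [Complex.inv_def, Complex.inv_def, Complex.normSq_conj, Complex.conj_conj,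
          add_comm, ← add_mul, Complex.add_conj]
        push_cast
        ring
      linear_combination P i j' * key
    rw [he]
    exact aux_fromBlocks_psd (aux_psd_smul hP _ hc)
  -- second summand: diagonal part
  have hS2 : (-Θ11 - nabᴴ * (Θ22 * nab)).PosSemidef := by
    rw [hΘ11, hΘ22, hnab, Matrix.diagonal_conjTranspose, Matrix.diagonal_mul_diagonal,
      Matrix.diagonal_mul_diagonal, Matrix.diagonal_neg, Matrix.diagonal_sub]
    refine Matrix.posSemidef_diagonal_iff.mpr fun k => ?_
    rcases k with i | (i | (i | (i | (i | (i | i))))) <;>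
      simp only [hg, Pi.sub_apply, Pi.neg_apply, Pi.star_apply, Sum.elim_inl, Sum.elim_inr]
    · simp
    · simpa using aux_entry_nonneg (q0f i) 1 (hq0f i) _ (aux_exp_norm_le s hre (τf i) (hτf i))
    · simpa using aux_entry_nonneg (q0b i) 1 (hq0b i) _ (aux_exp_norm_le s hre (τb i) (hτb i))
    · simpa using aux_entry_nonneg (q0 i) 1 (hq0 i) _ (aux_exp_norm_le s hre (τ i) (hτ i))
    · simpa [neg_neg, Complex.ofReal_mul, Complex.ofReal_pow] using
        aux_entry_nonneg (q1f i) (τf i) (hq1f i) _ (aux_int_norm_le s hs hre (τf i) (hτf i))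
    · simpa [neg_neg, Complex.ofReal_mul, Complex.ofReal_pow] using
        aux_entry_nonneg (q1b i) (τb i) (hq1b i) _ (aux_int_norm_le s hs hre (τb i) (hτb i))
    · simpa [neg_neg, Complex.ofReal_mul, Complex.ofReal_pow] using
        aux_entry_nonneg (q1 i) (τ i) (hq1 i) _ (aux_int_norm_le s hs hre (τ i) (hτ i))
  have hsplit : -(Jᴴ * Θ * J)
      = (-(Θ12 * nab) - nabᴴ * Θ12ᴴ) + (-Θ11 - nabᴴ * (Θ22 * nab)) := by
    rw [hM]; abel
  rw [hsplit]
  exact hS1.add hS2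
end

section
/- With the notation of the linearization setup, the partial derivative of $F$ with respect to its fourth argument $\beta$ (the queue length), evaluated at the equilibrium point $(x_0, x_0, \xi_0, b_0, p_0)$, equals $h_i = -\frac{2(1-p_0)}{C \tau_0^3}$, provided $\sum_{j=1}^N \eta_j x_{j0} = C$. -/
open scoped BigOperators

/-- The partial derivative of `F` with respect to its fourth argument (the queue length) at the equilibrium equals `hᵢ = -2(1-p₀)/(Cτ₀³)`. -/
theorem tcp_linearization_10 (N : ℕ) (hN : 1 ≤ N)
    (C : ℝ) (hC : 0 < C)
    (η : Fin N → ℝ) (hη : ∀ j, 0 < η j)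
    (Tp : ℝ) (hTp : 0 < Tp)
    (b₀ : ℝ) (hb₀ : 0 ≤ b₀)
    (τ₀ : ℝ) (hτ₀def : τ₀ = b₀ / C + Tp) (hτ₀ : 0 < τ₀)
    (x₀ : ℝ) (hx₀ : 0 < x₀)
    (ξ₀ : Fin N → ℝ) (hξ₀ : ∀ j, 0 < ξ₀ j)
    (p₀ : ℝ)
    (F : ℝ → ℝ → (Fin N → ℝ) → ℝ → ℝ → ℝ)
    (hF : ∀ x y ξ β ρ, F x y ξ β ρ =
      y * (1 - ρ) / (x * (β / C + Tp) ^ 2) - y * x / 2 * ρ +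
        x / (β / C + Tp) - x / ((β / C + Tp) * C) * ∑ j, η j * ξ j)
    (hsum : ∑ j, η j * ξ₀ j = C) :
    deriv (fun β => F x₀ x₀ ξ₀ β p₀) b₀ = -(2 * (1 - p₀) / (C * τ₀ ^ 3)) := by
  have hub : b₀ / C + Tp = τ₀ := hτ₀def.symm
  have hune : b₀ / C + Tp ≠ 0 := by rw [hub]; exact ne_of_gt hτ₀
  have hCne : C ≠ 0 := ne_of_gt hC
  have hτne : τ₀ ≠ 0 := ne_of_gt hτ₀
  have hx₀ne : x₀ ≠ 0 := ne_of_gt hx₀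
  have hu : HasDerivAt (fun β : ℝ => β / C + Tp) (1 / C) b₀ := by
    simpa using ((hasDerivAt_id b₀).div_const C).add_const Tp
  have hden : HasDerivAt (fun β : ℝ => x₀ * (β / C + Tp) ^ 2)
      (x₀ * (2 * (b₀ / C + Tp) ^ 1 * (1 / C))) b₀ := (hu.pow 2).const_mul x₀
  have hdenne : x₀ * (b₀ / C + Tp) ^ 2 ≠ 0 := by
    rw [hub]; positivity
  have hA : HasDerivAt (fun β : ℝ => x₀ * (1 - p₀) / (x₀ * (β / C + Tp) ^ 2))
      ((0 * (x₀ * (b₀ / C + Tp) ^ 2) -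
        x₀ * (1 - p₀) * (x₀ * (2 * (b₀ / C + Tp) ^ 1 * (1 / C)))) /
        (x₀ * (b₀ / C + Tp) ^ 2) ^ 2) b₀ :=
    (hasDerivAt_const b₀ (x₀ * (1 - p₀))).div hden hdenne
  have hC' : HasDerivAt (fun β : ℝ => x₀ / (β / C + Tp))
      ((0 * (b₀ / C + Tp) - x₀ * (1 / C)) / (b₀ / C + Tp) ^ 2) b₀ :=
    (hasDerivAt_const b₀ x₀).div hu hune
  have hdne2 : (b₀ / C + Tp) * C ≠ 0 := mul_ne_zero hune hCne
  have hD : HasDerivAt (fun β : ℝ => x₀ / ((β / C + Tp) * C) * C)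
      (((0 * ((b₀ / C + Tp) * C) - x₀ * (1 / C * C)) / ((b₀ / C + Tp) * C) ^ 2) * C) b₀ :=
    ((hasDerivAt_const b₀ x₀).div (hu.mul_const C) hdne2).mul_const C
  have htot : HasDerivAt (fun β : ℝ =>
      x₀ * (1 - p₀) / (x₀ * (β / C + Tp) ^ 2) - x₀ * x₀ / 2 * p₀ +
        x₀ / (β / C + Tp) - x₀ / ((β / C + Tp) * C) * C)
      (-(2 * (1 - p₀) / (C * τ₀ ^ 3))) b₀ := by
    have := ((hA.sub_const (x₀ * x₀ / 2 * p₀)).add hC').sub hD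
    refine this.congr_deriv ?_
    rw [hub]
    field_simp
    ring
  have heq : (fun β => F x₀ x₀ ξ₀ β p₀) = fun β : ℝ =>
      x₀ * (1 - p₀) / (x₀ * (β / C + Tp) ^ 2) - x₀ * x₀ / 2 * p₀ +
        x₀ / (β / C + Tp) - x₀ / ((β / C + Tp) * C) * C := by
    funext β; rw [hF, hsum]
  rw [heq]
  exact htot.deriv
end

section
/- With the notation of the linearization setup, if moreover the equilibrium drop probability satisfies $p_0 = \frac{2}{2 + (x_0 \tau_0)^2}$, then the partial derivative of $F$ with respect to its second argument $y$ (the rate delayed by the full round trip time $\tau_i$), evaluated at the equilibrium point $(x_0, x_0, \xi_0, b_0, p_0)$, equals $0$. Consequently, the open-loop linearized dynamics contain no term in the $\tau_i$-delayed rate $\delta x_i(t - \tau_i)$. -/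
open scoped BigOperators

/-- If the equilibrium drop probability satisfies `p₀ = 2/(2+(x₀τ₀)²)`, the partial derivative of `F` with respect to its second argument (the rate delayed by the round trip time) vanishes at the equilibrium. -/
theorem tcp_linearization_13 (N : ℕ) (hN : 1 ≤ N)
    (C : ℝ) (hC : 0 < C)
    (η : Fin N → ℝ) (hη : ∀ j, 0 < η j)
    (Tp : ℝ) (hTp : 0 < Tp)
    (b₀ : ℝ) (hb₀ : 0 ≤ b₀)
    (τ₀ : ℝ) (hτ₀def : τ₀ = b₀ / C + Tp) (hτ₀ : 0 < τ₀)
    (x₀ : ℝ) (hx₀ : 0 < x₀)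
    (ξ₀ : Fin N → ℝ) (hξ₀ : ∀ j, 0 < ξ₀ j)
    (p₀ : ℝ)
    (F : ℝ → ℝ → (Fin N → ℝ) → ℝ → ℝ → ℝ)
    (hF : ∀ x y ξ β ρ, F x y ξ β ρ =
      y * (1 - ρ) / (x * (β / C + Tp) ^ 2) - y * x / 2 * ρ +
        x / (β / C + Tp) - x / ((β / C + Tp) * C) * ∑ j, η j * ξ j)
    (hp₀ : p₀ = 2 / (2 + (x₀ * τ₀) ^ 2)) :
    deriv (fun y => F x₀ y ξ₀ b₀ p₀) x₀ = 0 := by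
  have hτ : b₀ / C + Tp = τ₀ := hτ₀def.symm
  have hderiv : deriv (fun y => F x₀ y ξ₀ b₀ p₀) x₀
      = (1 - p₀) / (x₀ * τ₀ ^ 2) - x₀ / 2 * p₀ := by
    simp only [hF, hτ]
    have : (fun y : ℝ => y * (1 - p₀) / (x₀ * τ₀ ^ 2) - y * x₀ / 2 * p₀ +
        x₀ / τ₀ - x₀ / (τ₀ * C) * ∑ j, η j * ξ₀ j)
        = fun y : ℝ => y * ((1 - p₀) / (x₀ * τ₀ ^ 2) - x₀ / 2 * p₀) +
          (x₀ / τ₀ - x₀ / (τ₀ * C) * ∑ j, η j * ξ₀ j) := by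
      funext y; ring
    rw [this]
    simp [deriv_add_const, mul_comm]
  rw [hderiv, hp₀]
  have h1 : (0:ℝ) < 2 + (x₀ * τ₀) ^ 2 := by positivity
  field_simp
  ring
end
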